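/- Let M be a d×d lower triangular real matrix with M_{ii} ∈ [-1, 0) for all i and M_{ij} ≥ 0 for j < i, and let C be a diagonal positive semidefinite d×d matrix. Then M is stable, and the unique solution Σ of MΣ + ΣMᵀ + C = 0 satisfies Σ_{dd} ≥ −C_{dd}/(2 M_{dd}) + (1/2) ∑_{i=1}^{d-1} ∑_{j=1}^{d-1} M_{di} M_{dj} Σ_{ij}. -/

import Mathlib

open Matrix

/-- Lower bound on the marginal variance of the last node for an acyclic model:
if `M` is lower triangular with diagonal in `[-1,0)` and nonnegative off-diagonal
entries, and `C` is diagonal PSD, then `M` is stable and any solution of the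
Lyapunov equation satisfies
`Σ_dd ≥ -C_dd/(2 M_dd) + (1/2) ∑_{i,j<d} M_di M_dj Σ_ij`. -/
theorem variance_lower_bound {n : ℕ} (M C : Matrix (Fin (n + 1)) (Fin (n + 1)) ℝ)
    (htri : ∀ i j : Fin (n + 1), i < j → M i j = 0)
    (hdiag : ∀ i, M i i ∈ Set.Ico (-1 : ℝ) 0)
    (hoff : ∀ i j : Fin (n + 1), j < i → 0 ≤ M i j)
    (hCdiag : ∀ i j : Fin (n + 1), i ≠ j → C i j = 0)
    (hC : C.PosSemidef) :
    (∀ μ ∈ spectrum ℂ (M.map Complex.ofReal), μ.re < 0) ∧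
      ∀ S : Matrix (Fin (n + 1)) (Fin (n + 1)) ℝ, M * S + S * Mᵀ + C = 0 →
        S (Fin.last n) (Fin.last n) ≥
          -C (Fin.last n) (Fin.last n) / (2 * M (Fin.last n) (Fin.last n)) +
            1 / 2 * ∑ i : Fin n, ∑ j : Fin n,
              M (Fin.last n) i.castSucc * M (Fin.last n) j.castSucc *
                S i.castSucc j.castSucc := by
  constructor
  · -- stability: spectrum of a triangular matrix is its diagonal
      intro μ hμ
      rw [spectrum.mem_iff] at hμ
      by_contra h
      push_neg at h
      apply hμ
      apply (Matrix.isUnit_iff_isUnit_det _).2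
      have htr : ((algebraMap ℂ (Matrix (Fin (n+1)) (Fin (n+1)) ℂ)) μ - M.map Complex.ofReal).BlockTriangular OrderDual.toDual := by
        intro i j hij
        have hij' : i < j := hij
        simp [Matrix.algebraMap_eq_diagonal, Matrix.diagonal_apply_ne _ (ne_of_lt hij'), htri i j hij']
      rw [Matrix.det_of_lowerTriangular _ htr]
      rw [isUnit_iff_ne_zero]
      apply Finset.prod_ne_zero_iff.2
      intro i _
      intro hz
      have : ((algebraMap ℂ (Matrix (Fin (n+1)) (Fin (n+1)) ℂ)) μ - M.map Complex.ofReal) i i = μ - Complex.ofReal (M i i) := by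
        simp [Matrix.algebraMap_eq_diagonal]
      rw [this] at hz
      have hre : (μ - Complex.ofReal (M i i)).re = 0 := by rw [hz]; simp
      simp [Complex.sub_re] at hre
      have := (hdiag i).2
      linarith
  · intro S hS
    have hE : ∀ i j, (∑ k, M i k * S k j) + (∑ k, S i k * M j k) + C i j = 0 := by
      intro i j
      have := congrFun (congrFun hS i) j
      simpa [Matrix.mul_apply, Matrix.add_apply, Matrix.transpose_apply] using this
    have hCnn : ∀ i j, 0 ≤ C i j := by
      intro i j
      rcases eq_or_ne i j with rfl | hne
      · exact hC.diag_nonneg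
      · rw [hCdiag i j hne]
    have hSnn : ∀ i j, 0 ≤ S i j := by
      suffices H : ∀ N (i j : Fin (n+1)), i.val + j.val ≤ N → 0 ≤ S i j from
        fun i j => H (i.val + j.val) i j le_rfl
      intro N
      induction N using Nat.strong_induction_on with
      | _ N IH =>
      intro i j hij
      have hs1 : ∑ k, M i k * S k j = M i i * S i j + ∑ k ∈ Finset.univ.erase i, M i k * S k j := by
        exact (Finset.add_sum_erase _ _ (Finset.mem_univ i)).symm
      have hs2 : ∑ k, S i k * M j k = S i j * M j j + ∑ k ∈ Finset.univ.erase j, S i k * M j k := by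
        exact (Finset.add_sum_erase _ _ (Finset.mem_univ j)).symm
      have hA1 : 0 ≤ ∑ k ∈ Finset.univ.erase i, M i k * S k j := by
        apply Finset.sum_nonneg
        intro k hk
        have hki : k ≠ i := Finset.ne_of_mem_erase hk
        rcases lt_or_gt_of_ne hki with h1 | h1
        · have hkj : (k:ℕ) + j < N := lt_of_lt_of_le (by omega) hij
          exact mul_nonneg (hoff i k h1) (IH _ hkj k j le_rfl)
        · rw [htri i k h1]; simp
      have hA2 : 0 ≤ ∑ k ∈ Finset.univ.erase j, S i k * M j k := by
        apply Finset.sum_nonneg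
        intro k hk
        have hkj : k ≠ j := Finset.ne_of_mem_erase hk
        rcases lt_or_gt_of_ne hkj with h1 | h1
        · have hik : (i:ℕ) + k < N := lt_of_lt_of_le (by omega) hij
          exact mul_nonneg (IH _ hik i k le_rfl) (hoff j k h1)
        · rw [htri j k h1]; simp
      have heq := hE i j
      rw [hs1, hs2] at heq
      rcases le_or_gt 0 (S i j) with h | h
      · exact h
      exfalso
      have h1 : 0 < (M i i + M j j) * S i j :=
        mul_pos_of_neg_of_neg (by have := (hdiag i).2; have := (hdiag j).2; linarith) h
      have := hCnn i j
      nlinarith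
    set L := Fin.last n with hL
    have hmnn : ∀ k : Fin n, 0 ≤ M L k.castSucc :=
      fun k => hoff L k.castSucc (Fin.castSucc_lt_last k)
    -- the per-k inequality
    have key : ∀ k : Fin n,
        ∑ l : Fin n, M L l.castSucc * (S k.castSucc l.castSucc + S l.castSucc k.castSucc) ≤
          2 * (S k.castSucc L + S L k.castSucc) := by
      intro k
      have e1 := hE k.castSucc L
      have e2 := hE L k.castSucc
      rw [Fin.sum_univ_castSucc (f := fun l => S k.castSucc l * M L l)] at e1
      rw [Fin.sum_univ_castSucc (f := fun l => M L l * S l k.castSucc)] at e2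
      have hCk : C k.castSucc L = 0 := hCdiag _ _ (ne_of_lt (Fin.castSucc_lt_last k))
      have hCk' : C L k.castSucc = 0 := hCdiag _ _ (ne_of_gt (Fin.castSucc_lt_last k))
      -- combine the two "full" sums over Fin (n+1)
      have hcomb : ∑ l, M k.castSucc l * S l L + ∑ l, S L l * M k.castSucc l
          = ∑ l, M k.castSucc l * (S l L + S L l) := by
        rw [← Finset.sum_add_distrib]; apply Finset.sum_congr rfl; intro l _; ring
      have hsplit : ∑ l, M k.castSucc l * (S l L + S L l)
          = M k.castSucc k.castSucc * (S k.castSucc L + S L k.castSucc)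
            + ∑ l ∈ Finset.univ.erase k.castSucc, M k.castSucc l * (S l L + S L l) :=
        (Finset.add_sum_erase _ _ (Finset.mem_univ _)).symm
      have hEnn : 0 ≤ ∑ l ∈ Finset.univ.erase k.castSucc, M k.castSucc l * (S l L + S L l) := by
        apply Finset.sum_nonneg
        intro l hl
        have hne : l ≠ k.castSucc := Finset.ne_of_mem_erase hl
        rcases lt_or_gt_of_ne hne with h1 | h1
        · exact mul_nonneg (hoff _ _ h1) (by have := hSnn l L; have := hSnn L l; linarith)
        · rw [htri _ _ h1]; simp
      have hunn : 0 ≤ S k.castSucc L + S L k.castSucc := by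
        have := hSnn k.castSucc L; have := hSnn L k.castSucc; linarith
      have hdm : -2 ≤ M k.castSucc k.castSucc + M L L := by
        have := (hdiag k.castSucc).1; have := (hdiag L).1; linarith
      -- sum of both entry equations
      have hsum : ∑ l : Fin n, M L l.castSucc * (S k.castSucc l.castSucc + S l.castSucc k.castSucc)
          = -((M k.castSucc k.castSucc + M L L) * (S k.castSucc L + S L k.castSucc))
            - ∑ l ∈ Finset.univ.erase k.castSucc, M k.castSucc l * (S l L + S L l) := by
        have h3 : ∑ l : Fin n, S k.castSucc l.castSucc * M L l.castSucc
            + ∑ l : Fin n, M L l.castSucc * S l.castSucc k.castSucc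
            = ∑ l : Fin n, M L l.castSucc * (S k.castSucc l.castSucc + S l.castSucc k.castSucc) := by
          rw [← Finset.sum_add_distrib]; apply Finset.sum_congr rfl; intro l _; ring
        have := hcomb
        rw [hsplit] at this
        -- e1 + e2 combined
        nlinarith [e1, e2]
      rw [hsum]
      nlinarith
    -- (L,L) equation
    have eLL := hE L L
    rw [Fin.sum_univ_castSucc (f := fun k => M L k * S k L),
        Fin.sum_univ_castSucc (f := fun k => S L k * M L k)] at eLL
    set P := ∑ k : Fin n, M L k.castSucc * (S k.castSucc L + S L k.castSucc) with hP
    set Q := ∑ i : Fin n, ∑ j : Fin n,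
        M L i.castSucc * M L j.castSucc * S i.castSucc j.castSucc with hQ
    have hPeq : ∑ k : Fin n, M L k.castSucc * S k.castSucc L
        + ∑ k : Fin n, S L k.castSucc * M L k.castSucc = P := by
      rw [hP, ← Finset.sum_add_distrib]; apply Finset.sum_congr rfl; intro l _; ring
    have hQnn : 0 ≤ Q := by
      apply Finset.sum_nonneg; intro i _; apply Finset.sum_nonneg; intro j _
      exact mul_nonneg (mul_nonneg (hmnn i) (hmnn j)) (hSnn _ _)
    have hPQ : 2 * Q ≤ 2 * P := by
      have hswap : ∑ k : Fin n, ∑ l : Fin n,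
          M L k.castSucc * M L l.castSucc * S l.castSucc k.castSucc = Q := by
        rw [hQ, Finset.sum_comm]
        apply Finset.sum_congr rfl; intro i _; apply Finset.sum_congr rfl; intro j _; ring
      have h1 : ∑ k : Fin n, M L k.castSucc
          * (∑ l : Fin n, M L l.castSucc * (S k.castSucc l.castSucc + S l.castSucc k.castSucc))
          = 2 * Q := by
        calc ∑ k : Fin n, M L k.castSucc
            * (∑ l : Fin n, M L l.castSucc * (S k.castSucc l.castSucc + S l.castSucc k.castSucc))
            = ∑ k : Fin n, ∑ l : Fin n,
              (M L k.castSucc * M L l.castSucc * S k.castSucc l.castSucc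
                + M L k.castSucc * M L l.castSucc * S l.castSucc k.castSucc) := by
              apply Finset.sum_congr rfl; intro k _
              rw [Finset.mul_sum]
              apply Finset.sum_congr rfl; intro l _; ring
          _ = Q + Q := by
              simp only [Finset.sum_add_distrib]
              rw [hswap, hQ]
          _ = 2 * Q := by ring
      rw [← h1]
      calc ∑ k : Fin n, M L k.castSucc
          * (∑ l : Fin n, M L l.castSucc * (S k.castSucc l.castSucc + S l.castSucc k.castSucc))
          ≤ ∑ k : Fin n, M L k.castSucc * (2 * (S k.castSucc L + S L k.castSucc)) := by
            apply Finset.sum_le_sum; intro k _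
            exact mul_le_mul_of_nonneg_left (key k) (hmnn k)
        _ = 2 * P := by rw [hP, Finset.mul_sum]; apply Finset.sum_congr rfl; intro k _; ring
    have hPnn : 0 ≤ P := by linarith
    set a := M L L with ha
    set c := C L L with hc
    have hal : a < 0 := (hdiag L).2
    have hag : -1 ≤ a := (hdiag L).1
    have hcnn : 0 ≤ c := hCnn L L
    -- eLL : ... rewrite
    have heq : 2 * a * S L L + P + c = 0 := by
      have := hPeq
      nlinarith [eLL]
    -- final arithmetic
    have hSLL : S L L = (P + c) / (2 * (-a)) := by
      rw [eq_div_iff (by linarith : (2:ℝ) * (-a) ≠ 0)]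
      linarith [heq]
    rw [ge_iff_le, hSLL]
    have hD : (0:ℝ) < 2 * (-a) := by linarith
    have hsplit2 : (P + c) / (2 * (-a)) = P / (2 * (-a)) + c / (2 * (-a)) := add_div _ _ _
    have hneg : -c / (2 * a) = c / (2 * (-a)) := by
      rw [mul_neg, div_neg, neg_div]
    rw [hsplit2, hneg]
    have h5 : P / 2 ≤ P / (2 * (-a)) := by
      apply div_le_div_of_nonneg_left hPnn hD
      linarith
    have h6 : Q / 2 ≤ P / 2 := by linarith
    have : 1/2 * Q ≤ P / (2 * (-a)) := by
      rw [show (1:ℝ)/2 * Q = Q/2 by ring]; linarith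
    linarith
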